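/- Let X = R² with the norm whose unit ball is the hexagon with vertices ±(1,1), ±(1/2,2), ±(−1,1). For the supporting functionals f₁(α,β) = (2/3)α + (1/3)β and f₂(α,β) = α corresponding to the two edges meeting at the vertex (1,1), one has max{|f₁(x)|, |f₂(x)|} ≥ 5/17 for every x on the unit sphere of X. -/

import Mathlib

open Metric Set

/-- Vertices of the hexagon ±(1,1), ±(1/2,2), ±(−1,1). -/
def hexVerts : Set (Fin 2 → ℝ) :=
  {![1, 1], ![1/2, 2], ![-1, 1], ![-1, -1], ![-(1/2), -2], ![1, -1]}

lemma combo_mem {s : Set (Fin 2 → ℝ)} (hs : Convex ℝ s) {v₁ v₂ v₃ : Fin 2 → ℝ}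
    (h₁ : v₁ ∈ s) (h₂ : v₂ ∈ s) (h₃ : v₃ ∈ s) {a b c : ℝ}
    (ha : 0 ≤ a) (hb : 0 ≤ b) (hc : 0 ≤ c) (habc : a + b + c = 1) :
    a • v₁ + b • v₂ + c • v₃ ∈ s := by
  have := hs.sum_mem (t := (Finset.univ : Finset (Fin 3))) (w := ![a, b, c])
    (z := ![v₁, v₂, v₃]) ?_ ?_ ?_
  · simpa [Fin.sum_univ_three] using this
  · intro i _; fin_cases i <;> simpa
  · simp [Fin.sum_univ_three, habc]
  · intro i _; fin_cases i <;> simpa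

lemma mem_hull (p : Fin 2 → ℝ) (h1 : |p 0| ≤ 1) (h2 : |2 * p 0 + p 1| ≤ 3)
    (h3 : |(-2) * p 0 + 3 * p 1| ≤ 5) : p ∈ convexHull ℝ hexVerts := by
  have hconv : Convex ℝ (convexHull ℝ hexVerts) := convex_convexHull ℝ _
  have hA : ![(1:ℝ), 1] ∈ convexHull ℝ hexVerts := subset_convexHull ℝ _ (by simp [hexVerts])
  have hB : ![(1:ℝ)/2, 2] ∈ convexHull ℝ hexVerts := subset_convexHull ℝ _ (by simp [hexVerts])
  have hC : ![(-1:ℝ), 1] ∈ convexHull ℝ hexVerts := subset_convexHull ℝ _ (by simp [hexVerts])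
  have hA' : ![(-1:ℝ), -1] ∈ convexHull ℝ hexVerts := subset_convexHull ℝ _ (by simp [hexVerts])
  have hB' : ![-((1:ℝ)/2), -2] ∈ convexHull ℝ hexVerts := subset_convexHull ℝ _ (by simp [hexVerts])
  have hC' : ![(1:ℝ), -1] ∈ convexHull ℝ hexVerts := subset_convexHull ℝ _ (by simp [hexVerts])
  rw [abs_le] at h1 h2 h3
  obtain ⟨h1l, h1r⟩ := h1
  obtain ⟨h2l, h2r⟩ := h2
  obtain ⟨h3l, h3r⟩ := h3
  rcases le_or_gt 1 (p 1) with hb1 | hb1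
  · -- top triangle (1,1),(1/2,2),(-1,1)
    have hp : p = ((2 * p 0 - 3 * p 1 + 5) / 4) • ![(1:ℝ), 1] + (p 1 - 1) • ![(1:ℝ)/2, 2]
        + ((3 - p 1 - 2 * p 0) / 4) • ![(-1:ℝ), 1] := by
      funext i; fin_cases i <;> simp <;> ring
    rw [hp]
    exact combo_mem hconv hA hB hC (by linarith) (by linarith) (by linarith) (by ring)
  rcases le_or_gt (p 1) (-1) with hb2 | hb2
  · -- bottom triangle
    have hp : p = ((-(2 * p 0) + 3 * p 1 + 5) / 4) • ![(-1:ℝ), -1]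
        + (-(p 1) - 1) • ![-((1:ℝ)/2), -2] + ((3 + p 1 + 2 * p 0) / 4) • ![(1:ℝ), -1] := by
      funext i; fin_cases i <;> simp <;> ring
    rw [hp]
    exact combo_mem hconv hA' hB' hC' (by linarith) (by linarith) (by linarith) (by ring)
  rcases le_or_gt (p 0) (p 1) with hd | hd
  · -- triangle (1,1),(-1,1),(-1,-1)
    have hp : p = ((p 0 + 1) / 2) • ![(1:ℝ), 1] + ((p 1 - p 0) / 2) • ![(-1:ℝ), 1]
        + ((1 - p 1) / 2) • ![(-1:ℝ), -1] := by
      funext i; fin_cases i <;> simp <;> ring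
    rw [hp]
    exact combo_mem hconv hA hC hA' (by linarith) (by linarith) (by linarith) (by ring)
  · -- triangle (-1,-1),(1,-1),(1,1)
    have hp : p = ((1 - p 0) / 2) • ![(-1:ℝ), -1] + ((p 0 - p 1) / 2) • ![(1:ℝ), -1]
        + ((1 + p 1) / 2) • ![(1:ℝ), 1] := by
      funext i; fin_cases i <;> simp <;> ring
    rw [hp]
    exact combo_mem hconv hA' hC' hA (by linarith) (by linarith) (by linarith) (by ring)

theorem stmt_6 {X : Type*} [NormedAddCommGroup X] [NormedSpace ℝ X]
    (e : X ≃ₗ[ℝ] (Fin 2 → ℝ))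
    (hball : closedBall (0 : X) 1 = e ⁻¹' (convexHull ℝ hexVerts))
    (f₁ f₂ : X → ℝ)
    (hf₁ : ∀ x : X, f₁ x = (2/3) * e x 0 + (1/3) * e x 1)
    (hf₂ : ∀ x : X, f₂ x = e x 0) :
    ∀ x : X, ‖x‖ = 1 → max |f₁ x| |f₂ x| ≥ 5 / 17 := by
  intro x hx
  by_contra hlt
  push_neg at hlt
  have h1 : |f₁ x| < 5/17 := lt_of_le_of_lt (le_max_left _ _) hlt
  have h2 : |f₂ x| < 5/17 := lt_of_le_of_lt (le_max_right _ _) hlt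
  set α := e x 0 with hα
  set β := e x 1 with hβ
  rw [hf₁ x] at h1
  rw [hf₂ x] at h2
  -- derived bounds
  have e1 : |2 * α + β| < 15/17 := by
    have : 2 * α + β = 3 * ((2/3) * α + (1/3) * β) := by ring
    rw [this, abs_mul, abs_of_pos (by norm_num : (0:ℝ) < 3)]
    linarith
  have e2 : |(-2) * α + 3 * β| < 5 := by
    have h : (-2) * α + 3 * β = 9 * ((2/3) * α + (1/3) * β) - 8 * α := by ring
    calc |(-2) * α + 3 * β| = |9 * ((2/3) * α + (1/3) * β) + (-8) * α| := by rw [h]; ring_nf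
    _ ≤ |9 * ((2/3) * α + (1/3) * β)| + |(-8) * α| := abs_add_le _ _
    _ = 9 * |(2/3) * α + (1/3) * β| + 8 * |α| := by
        rw [abs_mul, abs_mul]; norm_num
    _ < 5 := by linarith
  set r : ℝ := max |α| (max (|2 * α + β| / 3) (|(-2) * α + 3 * β| / 5)) with hr
  have hrlt : r < 1 := by
    apply max_lt (by linarith) (max_lt (by linarith) (by linarith))
  have hr0 : 0 < r := by
    rcases lt_or_ge 0 r with h | h
    · exact h
    · exfalso
      have ha0 : |α| ≤ 0 := le_trans (le_max_left _ _) h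
      have hb0 : |2 * α + β| / 3 ≤ 0 := le_trans (le_trans (le_max_left _ _) (le_max_right _ _)) h
      have ha : α = 0 := abs_nonpos_iff.mp ha0
      have hb : β = 0 := by
        have := abs_nonpos_iff.mp (by linarith [abs_nonneg (2 * α + β)] : |2 * α + β| ≤ 0)
        rw [ha] at this; linarith
      have hex : e x = 0 := by
        funext i
        fin_cases i
        · exact ha
        · exact hb
      have : x = 0 := by
        have := congrArg e.symm hex
        simpa using this
      rw [this] at hx
      simp at hx
  -- the dilated point
  have hαr : |α| ≤ r := le_max_left _ _
  have hβr : |2 * α + β| ≤ 3 * r := by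
    have := le_trans (le_max_left _ _) (le_max_right _ _ : max (|2 * α + β| / 3) _ ≤ r)
    linarith
  have hγr : |(-2) * α + 3 * β| ≤ 5 * r := by
    have := le_trans (le_max_right _ _) (le_max_right _ _ : max (|2 * α + β| / 3) _ ≤ r)
    linarith
  set y : X := r⁻¹ • x with hy
  have hey : e y = r⁻¹ • e x := by simp [hy]
  have hey0 : e y 0 = r⁻¹ * α := by rw [hey]; simp; exact Or.inl rfl
  have hey1 : e y 1 = r⁻¹ * β := by rw [hey]; simp; exact Or.inl rfl
  have hrinv : (0:ℝ) < r⁻¹ := inv_pos.mpr hr0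
  have hmem : e y ∈ convexHull ℝ hexVerts := by
    apply mem_hull
    · rw [hey0, abs_mul, abs_of_pos hrinv]
      calc r⁻¹ * |α| ≤ r⁻¹ * r := mul_le_mul_of_nonneg_left hαr (le_of_lt hrinv)
        _ = 1 := inv_mul_cancel₀ (ne_of_gt hr0)
    · rw [hey0, hey1]
      have : 2 * (r⁻¹ * α) + r⁻¹ * β = r⁻¹ * (2 * α + β) := by ring
      rw [this, abs_mul, abs_of_pos hrinv]
      calc r⁻¹ * |2 * α + β| ≤ r⁻¹ * (3 * r) :=
            mul_le_mul_of_nonneg_left hβr (le_of_lt hrinv)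
        _ = 3 := by field_simp
    · rw [hey0, hey1]
      have : (-2) * (r⁻¹ * α) + 3 * (r⁻¹ * β) = r⁻¹ * ((-2) * α + 3 * β) := by ring
      rw [this, abs_mul, abs_of_pos hrinv]
      calc r⁻¹ * |(-2) * α + 3 * β| ≤ r⁻¹ * (5 * r) :=
            mul_le_mul_of_nonneg_left hγr (le_of_lt hrinv)
        _ = 5 := by field_simp
  have hyball : y ∈ closedBall (0 : X) 1 := by
    rw [hball]; exact hmem
  have hynorm : ‖y‖ = r⁻¹ := by
    rw [hy, norm_smul, hx, Real.norm_eq_abs, abs_of_pos hrinv, mul_one]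
  have : ‖y‖ ≤ 1 := by simpa [mem_closedBall, dist_zero_right] using hyball
  rw [hynorm] at this
  have hgt : (1:ℝ) < r⁻¹ := (one_lt_inv₀ hr0).mpr hrlt
  linarith
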